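/- Let β₁, β₂ > 1 be two different non-integers with ν_{β₁} = ν_{β₂}. Then exactly one of the orbits O_{β₁} = {T_{β₁}^n(1) : n ≥ 1} and O_{β₂} = {T_{β₂}^n(1) : n ≥ 1} contains the point 0. -/

import Mathlib

open MeasureTheory Filter Set Topology

/-- The orbit of `1` under the β-transformation: `betaOrb β 0 = 1`,
`betaOrb β (n+1) = β * betaOrb β n (mod 1)`. -/
noncomputable def betaOrb (β : ℝ) : ℕ → ℝ
  | 0 => 1
  | n + 1 => Int.fract (β * betaOrb β n)

/-- The unnormalized density `h_β(x) = Σ_{n ≥ 0, T_β^n(1) > x} β^{-n}`. -/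
noncomputable def hBeta (β : ℝ) (x : ℝ) : ℝ :=
  ∑' n : ℕ, if x < betaOrb β n then (β ^ n)⁻¹ else 0

/-- The normalization constant `K_β = Σ_{n ≥ 0} T_β^n(1) / β^n`. -/
noncomputable def KBeta (β : ℝ) : ℝ :=
  ∑' n : ℕ, betaOrb β n / β ^ n

/-- The Rényi–Parry measure: density `h_β / K_β` w.r.t. Lebesgue measure on `[0,1)`. -/
noncomputable def nuBeta (β : ℝ) : Measure ℝ :=
  (volume.restrict (Set.Ico (0 : ℝ) 1)).withDensity
    (fun x => ENNReal.ofReal (hBeta β x / KBeta β))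

/-- Left-limit version of `hBeta`. -/
noncomputable def GBeta (β : ℝ) (t : ℝ) : ℝ :=
  ∑' n : ℕ, if t ≤ betaOrb β n then (β ^ n)⁻¹ else 0

lemma betaOrb_succ (β : ℝ) (n : ℕ) : betaOrb β (n+1) = Int.fract (β * betaOrb β n) := rfl

lemma betaOrb_nonneg (β : ℝ) : ∀ n, 0 ≤ betaOrb β n
  | 0 => zero_le_one
  | (_+1) => Int.fract_nonneg _

lemma betaOrb_lt_one (β : ℝ) {n : ℕ} (hn : n ≠ 0) : betaOrb β n < 1 := by
  cases n with
  | zero => exact absurd rfl hn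
  | succ m => exact Int.fract_lt_one _

lemma betaOrb_le_one (β : ℝ) (n : ℕ) : betaOrb β n ≤ 1 := by
  cases n with
  | zero => exact le_rfl
  | succ m => exact (Int.fract_lt_one _).le

lemma betaOrb_zero_add {β : ℝ} {n : ℕ} (h : betaOrb β n = 0) :
    ∀ k, betaOrb β (n + k) = 0 := by
  intro k
  induction k with
  | zero => exact h
  | succ j ih => rw [show n + (j+1) = (n+j)+1 from rfl, betaOrb_succ, ih, mul_zero, Int.fract_zero]

lemma betaOrb_add_congr {β : ℝ} {i j : ℕ} (h : betaOrb β i = betaOrb β j) :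
    ∀ k, betaOrb β (i + k) = betaOrb β (j + k) := by
  intro k
  induction k with
  | zero => exact h
  | succ m ih =>
      rw [show i + (m+1) = (i+m)+1 from rfl, show j + (m+1) = (j+m)+1 from rfl,
        betaOrb_succ, betaOrb_succ, ih]

section
variable {β : ℝ} (hβ : 1 < β)
include hβ

lemma summable_geo : Summable (fun n : ℕ => (β ^ n)⁻¹) := by
  have h0 : (0:ℝ) ≤ β⁻¹ := by positivity
  have h1 : β⁻¹ < 1 := inv_lt_one_of_one_lt₀ hβ
  simpa [inv_pow] using summable_geometric_of_lt_one h0 h1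

lemma summable_of_le_geo {f : ℕ → ℝ} (h0 : ∀ n, 0 ≤ f n) (h1 : ∀ n, f n ≤ (β ^ n)⁻¹) :
    Summable f :=
  Summable.of_nonneg_of_le h0 h1 (summable_geo hβ)

lemma summable_ind (c : ℕ → Prop) [DecidablePred c] :
    Summable (fun n : ℕ => if c n then (β ^ n)⁻¹ else 0) := by
  refine summable_of_le_geo hβ (fun n => ?_) (fun n => ?_)
  · split_ifs <;> positivity
  · split_ifs with h
    · exact le_rfl
    · positivity

lemma tendsto_hBeta_left (t : ℝ) : Tendsto (hBeta β) (𝓝[<] t) (𝓝 (GBeta β t)) := by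
  have := tendsto_tsum_of_dominated_convergence (𝓕 := 𝓝[<] t)
    (f := fun x n => if x < betaOrb β n then (β ^ n)⁻¹ else 0)
    (g := fun n => if t ≤ betaOrb β n then (β ^ n)⁻¹ else 0)
    (bound := fun n => (β ^ n)⁻¹) (summable_geo hβ)
    (fun n => ?_) ?_
  · exact this
  · by_cases h : t ≤ betaOrb β n
    · rw [if_pos h]
      refine Tendsto.congr' ?_ tendsto_const_nhds
      filter_upwards [self_mem_nhdsWithin] with x hx
      exact (if_pos (lt_of_lt_of_le hx h)).symm
    · push_neg at h
      rw [if_neg (not_le.mpr h)]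
      refine Tendsto.congr' ?_ tendsto_const_nhds
      filter_upwards [Ioo_mem_nhdsLT h] with x hx
      exact (if_neg (not_lt.mpr hx.1.le)).symm
  · refine Eventually.of_forall (fun x n => ?_)
    rw [Real.norm_eq_abs]
    split_ifs
    · rw [abs_of_nonneg (by positivity)]
    · rw [abs_zero]; positivity

lemma tendsto_hBeta_right (t : ℝ) : Tendsto (hBeta β) (𝓝[>] t) (𝓝 (hBeta β t)) := by
  have := tendsto_tsum_of_dominated_convergence (𝓕 := 𝓝[>] t)
    (f := fun x n => if x < betaOrb β n then (β ^ n)⁻¹ else 0)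
    (g := fun n => if t < betaOrb β n then (β ^ n)⁻¹ else 0)
    (bound := fun n => (β ^ n)⁻¹) (summable_geo hβ)
    (fun n => ?_) ?_
  · exact this
  · by_cases h : t < betaOrb β n
    · rw [if_pos h]
      refine Tendsto.congr' ?_ tendsto_const_nhds
      filter_upwards [Ioo_mem_nhdsGT h] with x hx
      exact (if_pos hx.2).symm
    · push_neg at h
      rw [if_neg (not_lt.mpr h)]
      refine Tendsto.congr' ?_ tendsto_const_nhds
      filter_upwards [self_mem_nhdsWithin] with x hx
      exact (if_neg (not_lt.mpr (h.trans hx.le))).symm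
  · refine Eventually.of_forall (fun x n => ?_)
    rw [Real.norm_eq_abs]
    split_ifs
    · rw [abs_of_nonneg (by positivity)]
    · rw [abs_zero]; positivity

lemma hBeta_antitone : Antitone (hBeta β) := by
  intro a b hab
  refine Summable.tsum_le_tsum (fun n => ?_) (summable_ind hβ _) (summable_ind hβ _)
  split_ifs with h1 h2
  · exact le_rfl
  · exact absurd (lt_of_le_of_lt hab h1) h2
  · positivity
  · exact le_rfl

lemma hBeta_measurable : Measurable (hBeta β) := (hBeta_antitone hβ).measurable

lemma hBeta_nonneg (x : ℝ) : 0 ≤ hBeta β x :=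
  tsum_nonneg (fun n => by split_ifs <;> positivity)

omit hβ in
lemma GBeta_one : GBeta β 1 = 1 := by
  unfold GBeta
  rw [tsum_eq_single 0 (fun n hn => if_neg (not_le.mpr (betaOrb_lt_one β hn)))]
  norm_num [show betaOrb β 0 = 1 from rfl]

lemma KBeta_ge_one : (1:ℝ) ≤ KBeta β := by
  unfold KBeta
  have hs : Summable (fun n : ℕ => betaOrb β n / β ^ n) := by
    refine summable_of_le_geo hβ
      (fun n => div_nonneg (betaOrb_nonneg β n) (by positivity)) (fun n => ?_)
    rw [div_eq_mul_inv]
    nth_rewrite 2 [← one_mul ((β^n)⁻¹)]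
    exact mul_le_mul_of_nonneg_right (betaOrb_le_one β n) (by positivity)
  have := Summable.le_tsum hs 0 (fun j _ => div_nonneg (betaOrb_nonneg β j) (by positivity))
  norm_num [show betaOrb β 0 = 1 from rfl] at this
  exact this

lemma KBeta_pos : (0:ℝ) < KBeta β := lt_of_lt_of_le one_pos (KBeta_ge_one hβ)

end

lemma bothFiniteAbsurd {β₁ β₂ : ℝ} (hβ₁ : 1 < β₁) (hβ₂ : 1 < β₂) (hlt : β₁ < β₂)
    (hni₁ : ¬ ∃ k : ℤ, β₁ = k)
    (hjump : ∀ t : ℝ, 0 < t → t < 1 →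
      GBeta β₁ t - hBeta β₁ t = GBeta β₂ t - hBeta β₂ t)
    (hP₂ : ∃ n : ℕ, 1 ≤ n ∧ betaOrb β₂ n = 0) : False := by
  classical
  set t := Int.fract β₁ with htdef
  have horb1 : betaOrb β₁ 1 = t := by
    show Int.fract (β₁ * betaOrb β₁ 0) = t
    rw [show betaOrb β₁ 0 = 1 from rfl, mul_one]
  have ht1 : t < 1 := Int.fract_lt_one _
  have ht0 : 0 < t := by
    rcases lt_or_eq_of_le (Int.fract_nonneg β₁) with h | h
    · exact h
    · exfalso
      have h' := Int.floor_add_fract β₁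
      rw [← h, add_zero] at h'
      exact hni₁ ⟨⌊β₁⌋, h'.symm⟩
  have jump : ∀ (β : ℝ), 1 < β →
      GBeta β t - hBeta β t = ∑' n : ℕ, if betaOrb β n = t then (β ^ n)⁻¹ else 0 := by
    intro β hβ
    unfold GBeta hBeta
    rw [← Summable.tsum_sub (summable_ind hβ _) (summable_ind hβ _)]
    refine tsum_congr (fun n => ?_)
    rcases lt_trichotomy t (betaOrb β n) with h | h | h
    · rw [if_pos h.le, if_pos h, if_neg (ne_of_gt h), sub_self]
    · rw [if_pos h.le, if_neg (by rw [← h]; exact lt_irrefl t), if_pos h.symm, sub_zero]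
    · rw [if_neg (not_le.mpr h), if_neg (not_lt.mpr h.le), if_neg (ne_of_lt h), sub_self]
  have hJ := hjump t ht0 ht1
  rw [jump β₁ hβ₁, jump β₂ hβ₂] at hJ
  have hlow : β₁⁻¹ ≤ ∑' n : ℕ, if betaOrb β₁ n = t then (β₁ ^ n)⁻¹ else 0 := by
    have h := Summable.le_tsum (summable_ind hβ₁ (fun n => betaOrb β₁ n = t)) 1 (fun j _ => by split_ifs <;> positivity)
    rw [if_pos horb1, pow_one] at h
    exact h
  rw [hJ] at hlow
  obtain ⟨m, _, hm0⟩ := hP₂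
  have hex : ∃ n, betaOrb β₂ n = 0 := ⟨m, hm0⟩
  have hm₀0 : betaOrb β₂ (Nat.find hex) = 0 := Nat.find_spec hex
  have hmin : ∀ k, k < Nat.find hex → betaOrb β₂ k ≠ 0 := fun k hk => Nat.find_min hex hk
  have hafter : ∀ k, Nat.find hex ≤ k → betaOrb β₂ k = 0 := by
    intro k hk
    obtain ⟨j, rfl⟩ := Nat.exists_eq_add_of_le hk
    exact betaOrb_zero_add hm₀0 j
  by_cases hb : ∃ b : ℕ, betaOrb β₂ b = t
  · obtain ⟨b, hbt⟩ := hb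
    have hbne : b ≠ 0 := by
      intro h
      rw [h, show betaOrb β₂ 0 = 1 from rfl] at hbt
      exact absurd hbt.symm (ne_of_lt ht1)
    have hlt_find : ∀ n, betaOrb β₂ n = t → n < Nat.find hex := by
      intro n hn
      by_contra hge
      push_neg at hge
      rw [hafter n hge] at hn
      exact absurd hn.symm (ne_of_gt ht0)
    have huniq : ∀ n, n ≠ b → betaOrb β₂ n ≠ t := by
      intro n hne hn
      rcases lt_trichotomy n b with h | h | h
      · have hc := betaOrb_add_congr (hn.trans hbt.symm) (Nat.find hex - b)
        rw [Nat.add_sub_cancel' (hlt_find b hbt).le, hm₀0] at hc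
        exact hmin (n + (Nat.find hex - b)) (by have := hlt_find b hbt; omega) hc
      · exact hne h
      · have hc := betaOrb_add_congr (hbt.trans hn.symm) (Nat.find hex - n)
        rw [Nat.add_sub_cancel' (hlt_find n hn).le, hm₀0] at hc
        exact hmin (b + (Nat.find hex - n)) (by have := hlt_find n hn; omega) hc
    have hval : (∑' n : ℕ, if betaOrb β₂ n = t then (β₂ ^ n)⁻¹ else 0) = (β₂ ^ b)⁻¹ := by
      rw [tsum_eq_single b (fun n hn => if_neg (huniq n hn)), if_pos hbt]
    rw [hval] at hlow
    have h1 : (β₂ ^ b)⁻¹ ≤ β₂⁻¹ := by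
      apply inv_anti₀ (by positivity)
      exact le_self_pow₀ hβ₂.le hbne
    have h2 : β₂⁻¹ < β₁⁻¹ := by
      apply inv_strictAnti₀ (by positivity) hlt
    linarith
  · push_neg at hb
    have hval : (∑' n : ℕ, if betaOrb β₂ n = t then (β₂ ^ n)⁻¹ else 0) = 0 := by
      rw [tsum_congr (fun n => if_neg (hb n))]
      exact tsum_zero
    rw [hval] at hlow
    have hpos : (0:ℝ) < β₁⁻¹ := by positivity
    linarith

theorem stmt_12 (β₁ β₂ : ℝ) (hβ₁ : 1 < β₁) (hβ₂ : 1 < β₂) (hne : β₁ ≠ β₂)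
    (hni₁ : ¬ ∃ k : ℤ, β₁ = k) (hni₂ : ¬ ∃ k : ℤ, β₂ = k)
    (hν : nuBeta β₁ = nuBeta β₂) :
    Xor' (∃ n : ℕ, 1 ≤ n ∧ betaOrb β₁ n = 0) (∃ n : ℕ, 1 ≤ n ∧ betaOrb β₂ n = 0) := by
  classical
  have K1pos := KBeta_pos hβ₁
  have K2pos := KBeta_pos hβ₂
  -- Step 1: a.e. equality of densities
  unfold nuBeta at hν
  have m1 : Measurable fun x => ENNReal.ofReal (hBeta β₁ x / KBeta β₁) :=
    ((hBeta_measurable hβ₁).div_const _).ennreal_ofReal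
  have m2 : Measurable fun x => ENNReal.ofReal (hBeta β₂ x / KBeta β₂) :=
    ((hBeta_measurable hβ₂).div_const _).ennreal_ofReal
  have hae := (withDensity_eq_iff_of_sigmaFinite m1.aemeasurable m2.aemeasurable).mp hν
  have haeR : ∀ᵐ x ∂(volume.restrict (Ico (0:ℝ) 1)),
      hBeta β₁ x / KBeta β₁ = hBeta β₂ x / KBeta β₂ := by
    filter_upwards [hae] with x hx
    exact (ENNReal.ofReal_eq_ofReal_iff (div_nonneg (hBeta_nonneg hβ₁ x) K1pos.le)
      (div_nonneg (hBeta_nonneg hβ₂ x) K2pos.le)).mp hx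
  -- Step 2: the equality set clusters in every subinterval of [0,1)
  have hN : volume ({x : ℝ | ¬ (hBeta β₁ x / KBeta β₁ = hBeta β₂ x / KBeta β₂)}
      ∩ Ico (0:ℝ) 1) = 0 := by
    have h := ae_iff.mp haeR
    rwa [Measure.restrict_apply' measurableSet_Ico] at h
  have hacc : ∀ a t : ℝ, 0 ≤ a → a < t → t ≤ 1 →
      ∃ x, x ∈ Ioo a t ∧ hBeta β₁ x / KBeta β₁ = hBeta β₂ x / KBeta β₂ := by
    intro a t ha hat ht1
    by_contra hcon
    push_neg at hcon
    have hsub : Ioo a t ⊆ {x : ℝ | ¬ (hBeta β₁ x / KBeta β₁ = hBeta β₂ x / KBeta β₂)}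
        ∩ Ico (0:ℝ) 1 := fun x hx =>
      ⟨hcon x hx, ⟨ha.trans hx.1.le, lt_of_lt_of_le hx.2 ht1⟩⟩
    have hmono := measure_mono (μ := (volume : Measure ℝ)) hsub
    rw [hN, Real.volume_Ioo] at hmono
    simp only [nonpos_iff_eq_zero, ENNReal.ofReal_eq_zero] at hmono
    linarith
  -- Step 3: transfer one-sided limits through the a.e. equality
  have keyL : ∀ t : ℝ, 0 < t → t ≤ 1 →
      GBeta β₁ t / KBeta β₁ = GBeta β₂ t / KBeta β₂ := by
    intro t ht0 ht1
    set F := 𝓝[<] t ⊓ 𝓟 {x : ℝ | hBeta β₁ x / KBeta β₁ = hBeta β₂ x / KBeta β₂} with hF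
    haveI : F.NeBot := by
      rw [hF, inf_principal_neBot_iff]
      intro U hU
      obtain ⟨a, ha, hsub⟩ := mem_nhdsLT_iff_exists_Ioo_subset.mp hU
      obtain ⟨x, hx, hxe⟩ := hacc (max a 0) t (le_max_right a 0) (max_lt ha ht0) ht1
      exact ⟨x, hsub ⟨lt_of_le_of_lt (le_max_left a 0) hx.1, hx.2⟩, hxe⟩
    have h1 : Tendsto (fun x => hBeta β₁ x / KBeta β₁) F (𝓝 (GBeta β₁ t / KBeta β₁)) :=
      (Tendsto.div_const (tendsto_hBeta_left hβ₁ t) _).mono_left inf_le_left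
    have h2 : Tendsto (fun x => hBeta β₂ x / KBeta β₂) F (𝓝 (GBeta β₂ t / KBeta β₂)) :=
      (Tendsto.div_const (tendsto_hBeta_left hβ₂ t) _).mono_left inf_le_left
    have heq : (fun x => hBeta β₁ x / KBeta β₁) =ᶠ[F] (fun x => hBeta β₂ x / KBeta β₂) := by
      rw [hF]
      exact eventually_inf_principal.mpr (Eventually.of_forall fun x hx => hx)
    exact tendsto_nhds_unique (Tendsto.congr' heq h1) h2
  have keyR : ∀ t : ℝ, 0 ≤ t → t < 1 →
      hBeta β₁ t / KBeta β₁ = hBeta β₂ t / KBeta β₂ := by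
    intro t ht0 ht1
    set F := 𝓝[>] t ⊓ 𝓟 {x : ℝ | hBeta β₁ x / KBeta β₁ = hBeta β₂ x / KBeta β₂} with hF
    haveI : F.NeBot := by
      rw [hF, inf_principal_neBot_iff]
      intro U hU
      obtain ⟨u, hu, hsub⟩ := mem_nhdsGT_iff_exists_Ioo_subset.mp hU
      obtain ⟨x, hx, hxe⟩ := hacc t (min u 1) ht0 (lt_min hu ht1) (min_le_right u 1)
      exact ⟨x, hsub ⟨hx.1, lt_of_lt_of_le hx.2 (min_le_left u 1)⟩, hxe⟩
    have h1 : Tendsto (fun x => hBeta β₁ x / KBeta β₁) F (𝓝 (hBeta β₁ t / KBeta β₁)) :=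
      (Tendsto.div_const (tendsto_hBeta_right hβ₁ t) _).mono_left inf_le_left
    have h2 : Tendsto (fun x => hBeta β₂ x / KBeta β₂) F (𝓝 (hBeta β₂ t / KBeta β₂)) :=
      (Tendsto.div_const (tendsto_hBeta_right hβ₂ t) _).mono_left inf_le_left
    have heq : (fun x => hBeta β₁ x / KBeta β₁) =ᶠ[F] (fun x => hBeta β₂ x / KBeta β₂) := by
      rw [hF]
      exact eventually_inf_principal.mpr (Eventually.of_forall fun x hx => hx)
    exact tendsto_nhds_unique (Tendsto.congr' heq h1) h2
  -- Step 4: K₁ = K₂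
  have hKK : KBeta β₁ = KBeta β₂ := by
    have h := keyL 1 one_pos le_rfl
    rwa [GBeta_one, GBeta_one, one_div, one_div, inv_inj] at h
  have hG : ∀ t : ℝ, 0 < t → t ≤ 1 → GBeta β₁ t = GBeta β₂ t := by
    intro t h0 h1
    have h := keyL t h0 h1
    rw [← hKK, div_eq_div_iff K1pos.ne' K1pos.ne'] at h
    exact mul_right_cancel₀ K1pos.ne' h
  have hh : ∀ t : ℝ, 0 ≤ t → t < 1 → hBeta β₁ t = hBeta β₂ t := by
    intro t h0 h1
    have h := keyR t h0 h1
    rw [← hKK, div_eq_div_iff K1pos.ne' K1pos.ne'] at h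
    exact mul_right_cancel₀ K1pos.ne' h
  -- Step 5: case analysis
  by_cases hP₁ : ∃ n : ℕ, 1 ≤ n ∧ betaOrb β₁ n = 0
  · by_cases hP₂ : ∃ n : ℕ, 1 ≤ n ∧ betaOrb β₂ n = 0
    · exfalso
      have hjump : ∀ t : ℝ, 0 < t → t < 1 →
          GBeta β₁ t - hBeta β₁ t = GBeta β₂ t - hBeta β₂ t := fun t a b => by
        rw [hG t a b.le, hh t a.le b]
      rcases lt_trichotomy β₁ β₂ with hlt | heq | hgt
      · exact bothFiniteAbsurd hβ₁ hβ₂ hlt hni₁ hjump hP₂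
      · exact hne heq
      · exact bothFiniteAbsurd hβ₂ hβ₁ hgt hni₂ (fun t a b => (hjump t a b).symm) hP₁
    · exact Or.inl ⟨hP₁, hP₂⟩
  · by_cases hP₂ : ∃ n : ℕ, 1 ≤ n ∧ betaOrb β₂ n = 0
    · exact Or.inr ⟨hP₂, hP₁⟩
    · exfalso
      have e : ∀ (β:ℝ), 1 < β → (¬ ∃ n:ℕ, 1 ≤ n ∧ betaOrb β n = 0) →
          hBeta β 0 = (1 - β⁻¹)⁻¹ := by
        intro β hβ hP
        push_neg at hP
        unfold hBeta
        have hterm : ∀ n : ℕ, (if (0:ℝ) < betaOrb β n then (β ^ n)⁻¹ else 0) = (β⁻¹) ^ n := by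
          intro n
          rw [inv_pow]
          refine if_pos ?_
          rcases Nat.eq_zero_or_pos n with rfl | hn
          · norm_num [show betaOrb β 0 = 1 from rfl]
          · exact lt_of_le_of_ne (betaOrb_nonneg β n) (Ne.symm (hP n hn))
        rw [tsum_congr hterm, tsum_geometric_of_lt_one (by positivity)
          (inv_lt_one_of_one_lt₀ hβ)]
      have h0 := hh 0 le_rfl one_pos
      rw [e β₁ hβ₁ hP₁, e β₂ hβ₂ hP₂, inv_inj, sub_right_inj, inv_inj] at h0
      exact hne h0
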